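/- Let n be a natural number, let a : Fin n → ℝ and b : Fin n → ℝ with b monotone (b i ≤ b j whenever i ≤ j), and let f : ℝ → ℝ be monotone increasing and convex. Let σ* be a permutation of Fin n such that a ∘ σ* is monotone (i.e., σ* sorts a). Then for every permutation σ of Fin n, ∑ i, f(|a(σ*(i)) - b(i)|) ≤ ∑ i, f(|a(σ(i)) - b(i)|). -/

import Mathlib

/-- Two-point majorization: for convex `f`, if `r ≤ p`, `r ≤ q` and `p + q = r + t`,
then `f p + f q ≤ f r + f t`. -/
lemma majorize_two {f : ℝ → ℝ} (hconv : ConvexOn ℝ Set.univ f)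
    {r p q t : ℝ} (hrp : r ≤ p) (hrq : r ≤ q) (hsum : p + q = r + t) :
    f p + f q ≤ f r + f t := by
  have hpt : p ≤ t := by linarith
  rcases eq_or_lt_of_le (hrp.trans hpt) with h | hrt
  · have hp : p = r := le_antisymm (h ▸ hpt) hrp
    have hq : q = t := by linarith
    rw [hp, hq]
  · set lam : ℝ := (t - p) / (t - r) with hlam
    set mu : ℝ := (p - r) / (t - r) with hmu
    have htr : (0:ℝ) < t - r := by linarith
    have hl0 : 0 ≤ lam := div_nonneg (by linarith) htr.le
    have hm0 : 0 ≤ mu := div_nonneg (by linarith) htr.le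
    have hlm : lam + mu = 1 := by rw [hlam, hmu]; field_simp; ring
    have e1 : lam • r + mu • t = p := by
      rw [smul_eq_mul, smul_eq_mul, hlam, hmu]; field_simp; ring
    have e2 : mu • r + lam • t = q := by
      rw [smul_eq_mul, smul_eq_mul, hlam, hmu]; field_simp
      linear_combination (r - t) * hsum
    have h1 := hconv.2 (Set.mem_univ r) (Set.mem_univ t) hl0 hm0 hlm
    have h2 := hconv.2 (Set.mem_univ r) (Set.mem_univ t) hm0 hl0 (by linarith)
    rw [e1] at h1
    rw [e2] at h2
    simp only [smul_eq_mul] at h1 h2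
    have h3 : lam * f r + mu * f t + (mu * f r + lam * f t) = f r + f t := by
      linear_combination (f r + f t) * hlm
    linarith

/-- If `p + q ≤ r + s` and both `p, q` are at most `max r s`, then for monotone convex `f`,
`f p + f q ≤ f r + f s`. -/
lemma sum_max_le {f : ℝ → ℝ} (hmono : Monotone f) (hconv : ConvexOn ℝ Set.univ f)
    {p q r s : ℝ} (h1 : p + q ≤ r + s) (hp : p ≤ max r s) (hq : q ≤ max r s) :
    f p + f q ≤ f r + f s := by
  rcases le_total s r with hrs | hrs
  · rw [max_eq_left hrs] at hp hq
    rcases le_total p s with hps | hps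
    · rcases le_total q s with hqs | hqs
      · exact add_le_add (hmono hp) (hmono hqs)
      · have := add_le_add (hmono hps) (hmono hq); linarith
    · rcases le_total q s with hqs | hqs
      · exact add_le_add (hmono hp) (hmono hqs)
      · have := majorize_two hconv (r := s) (p := p) (q := q) (t := p + q - s)
          hps hqs (by ring)
        have h2 : f (p + q - s) ≤ f r := hmono (by linarith)
        linarith
  · rw [max_eq_right hrs] at hp hq
    rcases le_total p r with hps | hps
    · rcases le_total q r with hqs | hqs
      · exact add_le_add (hmono hps) (hmono (hqs.trans hrs))
      · exact add_le_add (hmono hps) (hmono hq)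
    · rcases le_total q r with hqs | hqs
      · have := add_le_add (hmono hp) (hmono hqs); linarith
      · have := majorize_two hconv (r := r) (p := p) (q := q) (t := p + q - r)
          hps hqs (by ring)
        have h2 : f (p + q - r) ≤ f s := hmono (by linarith)
        linarith

/-- Exchange lemma: sorted pairing is better on a pair. -/
lemma exchange_le {f : ℝ → ℝ} (hmono : Monotone f) (hconv : ConvexOn ℝ Set.univ f)
    {x y u v : ℝ} (hxy : x ≤ y) (huv : u ≤ v) :
    f |x - u| + f |y - v| ≤ f |x - v| + f |y - u| := by
  apply sum_max_le hmono hconv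
  · rcases abs_cases (x - u) with ⟨e1, _⟩ | ⟨e1, _⟩ <;>
    rcases abs_cases (y - v) with ⟨e2, _⟩ | ⟨e2, _⟩ <;>
    rcases abs_cases (x - v) with ⟨e3, _⟩ | ⟨e3, _⟩ <;>
    rcases abs_cases (y - u) with ⟨e4, _⟩ | ⟨e4, _⟩ <;>
    rw [e1, e2, e3, e4] <;> linarith
  · rcases abs_cases (x - u) with ⟨e1, _⟩ | ⟨e1, _⟩ <;> rw [e1]
    · exact le_max_of_le_right ((by linarith : x - u ≤ y - u).trans (le_abs_self _))
    · exact le_max_of_le_left ((by linarith : -(x - u) ≤ -(x - v)).trans (neg_le_abs _))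
  · rcases abs_cases (y - v) with ⟨e2, _⟩ | ⟨e2, _⟩ <;> rw [e2]
    · exact le_max_of_le_right ((by linarith : y - v ≤ y - u).trans (le_abs_self _))
    · exact le_max_of_le_left ((by linarith : -(y - v) ≤ -(x - v)).trans (neg_le_abs _))

/-- Key rearrangement-style lemma: when both sequences are monotone, matching in order
is optimal, over any finset containing the support of the permutation. -/
lemma key_sorted {n : ℕ} (a b : Fin n → ℝ) (ha : Monotone a) (hb : Monotone b)
    (f : ℝ → ℝ) (hmono : Monotone f) (hconv : ConvexOn ℝ Set.univ f)
    (s : Finset (Fin n)) :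
    ∀ σ : Equiv.Perm (Fin n), {x | σ x ≠ x} ⊆ ↑s →
      ∑ i ∈ s, f |a i - b i| ≤ ∑ i ∈ s, f |a (σ i) - b i| := by
  classical
  induction s using Finset.induction_on_max with
  | empty =>
    intro σ _
    simp
  | insert m s hmax ih =>
    intro σ hσ
    have hms : m ∉ s := fun h => lt_irrefl m (hmax m h)
    set τ : Equiv.Perm (Fin n) := σ.trans (Equiv.swap m (σ m)) with hτ
    have hτs : {x | τ x ≠ x} ⊆ ↑s := by
      intro x hx
      simp only [hτ, Ne, Set.mem_setOf_eq, Equiv.coe_trans, Equiv.swap_comp_apply] at hx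
      split_ifs at hx with h₁ h₂
      · obtain rfl | hax := eq_or_ne x m
        · contradiction
        · exact Finset.mem_coe.mpr
            (Finset.mem_of_mem_insert_of_ne (hσ fun h => hax <| h.symm.trans h₁) hax)
      · exact (hx <| σ.injective h₂.symm).elim
      · exact Finset.mem_coe.mpr
          (Finset.mem_of_mem_insert_of_ne (hσ hx) (ne_of_apply_ne _ h₂))
    have hind := ih τ hτs
    rw [Finset.sum_insert hms, Finset.sum_insert hms]
    refine le_trans (add_le_add_right hind _) ?_
    obtain hσm | hσm := eq_or_ne m (σ m)
    · rw [hτ, ← hσm, Equiv.swap_self, Equiv.trans_refl]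
    · have h1s : σ⁻¹ m ∈ s := by
        rw [Ne, ← Equiv.Perm.inv_eq_iff_eq] at hσm
        refine Finset.mem_of_mem_insert_of_ne (hσ fun h => hσm ?_) hσm
        rwa [(Equiv.Perm.eq_inv_iff_eq (f := σ) (x := σ⁻¹ m) (y := m)).mp rfl, eq_comm] at h
      have hσms : σ m ∈ s := by
        have : σ (σ m) ≠ σ m := fun h => hσm (σ.injective h).symm
        exact Finset.mem_of_mem_insert_of_ne (hσ this) hσm.symm
      rw [← Finset.sum_erase_add s _ h1s, ← Finset.sum_erase_add s _ h1s]
      have hτp : τ (σ⁻¹ m) = σ m := by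
        simp [hτ, (Equiv.Perm.eq_inv_iff_eq (f := σ) (x := σ⁻¹ m) (y := m)).mp rfl]
      have hsame : ∀ x ∈ s.erase (σ⁻¹ m), τ x = σ x := by
        intro x hx
        rw [Finset.mem_erase] at hx
        have hx1 : σ x ≠ m := fun h => hx.1 (by rw [← h, (Equiv.Perm.inv_eq_iff_eq (f := σ) (x := σ x) (y := x)).mpr rfl])
        have hx2 : σ x ≠ σ m := σ.injective.ne (fun h => hms (h ▸ hx.2))
        simp [hτ, Equiv.swap_apply_of_ne_of_ne hx1 hx2]
      have hsum_eq : ∑ x ∈ s.erase (σ⁻¹ m), f |a (τ x) - b x|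
          = ∑ x ∈ s.erase (σ⁻¹ m), f |a (σ x) - b x| :=
        Finset.sum_congr rfl fun x hx => by rw [hsame x hx]
      rw [hτp, (Equiv.Perm.eq_inv_iff_eq (f := σ) (x := σ⁻¹ m) (y := m)).mp rfl, hsum_eq]
      have hamax : a (σ m) ≤ a m := ha (hmax _ hσms).le
      have hbmax : b (σ⁻¹ m) ≤ b m := hb (hmax _ h1s).le
      have := exchange_le hmono hconv hamax hbmax
      linarith

theorem sorted_matching_optimal {n : ℕ} (a b : Fin n → ℝ) (hb : Monotone b)
    (f : ℝ → ℝ) (hmono : Monotone f) (hconv : ConvexOn ℝ Set.univ f)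
    (σstar : Equiv.Perm (Fin n)) (hsort : Monotone (a ∘ σstar)) :
    ∀ σ : Equiv.Perm (Fin n),
      ∑ i, f |a (σstar i) - b i| ≤ ∑ i, f |a (σ i) - b i| := by
  intro σ
  have h := key_sorted (a ∘ σstar) b hsort hb f hmono hconv Finset.univ
    (σ.trans σstar.symm) (by simp)
  simpa using h
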